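/- Let $\mathcal{T}$ be a triangulated category with finite-dimensional Hom-spaces, $\{P_i\}_{i\in I}$ and $\{S_j\}_{j\in I}$ families of objects indexed by bidegree shifts such that $\mathrm{Hom}(P_i[a+b\mathbb{X}],S_j)=0$ unless $i=j$ and $a=b=0$, in which case it is one-dimensional, and suppose every object $Z$ of $\mathcal{T}$ admits a 'minimal' presentation as a twisted complex built from objects $P_{i_\lambda}[a_\lambda+b_\lambda\mathbb{X}]$ with radical differentials. Then $\dim\mathrm{Hom}(Z,S_j[r+s\mathbb{X}])$ equals the number of indices $\lambda$ with $(i_\lambda,a_\lambda,b_\lambda)=(j,r,s)$; in particular the left orthogonal of $\mathrm{thick}(\mathcal{S}[\mathbb{Z}_{<0}\mathbb{X}])$ in $\mathrm{per}^{\mathbb{Z}}(\Pi_{\mathbb{X}}A)$ equals $\mathrm{thick}(\mathcal{P}[\mathbb{Z}_{\geq0}\mathbb{X}])$. -/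

import Mathlib

open CategoryTheory CategoryTheory.Limits CategoryTheory.Pretriangulated

universe v u

variable {C : Type u} [Category.{v} C] [HasZeroObject C] [HasShift C ℤ]
  [Preadditive C] [∀ n : ℤ, (shiftFunctor C n).Additive] [Pretriangulated C]

/-- `thickGen S X` : `X` belongs to the thick (triangulated, closed under direct
summands) subcategory generated by the set of objects `S`. -/
inductive thickGen (S : Set C) : C → Prop
  | of {X : C} : X ∈ S → thickGen S X
  | zero {X : C} : IsZero X → thickGen S X
  | isoClosed {X Y : C} : (X ≅ Y) → thickGen S X → thickGen S Y
  | shift {X : C} (n : ℤ) : thickGen S X → thickGen S (X⟦n⟧)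
  | ext₂ (T : Triangle C) : T ∈ distinguishedTriangles →
      thickGen S T.obj₁ → thickGen S T.obj₃ → thickGen S T.obj₂
  | smd {X Y : C} (s : X ⟶ Y) (r : Y ⟶ X) : s ≫ r = 𝟙 X → thickGen S Y → thickGen S X

/-- A set of objects is thick if it is closed under the formation rules of
thick subcategories. -/
def ThickClosed (P : Set C) : Prop := ∀ X : C, thickGen P X → X ∈ P

open scoped Classical

/-- A minimal presentation of an object `Z` of `per^ℤ(Π_𝕏 A)`: a finite
filtration `0 = Z₀ → Z₁ → ⋯ → Z_N ≅ Z` by distinguished triangles whose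
subquotients are bidegree shifts `P_{i_λ}[a_λ + b_λ𝕏]` of the projectives, and
whose connecting maps have components in the radical, i.e. induce the zero map
into every bidegree shift of a simple. -/
structure MinPres {ι : Type} (σ : ℤ → C ⥤ C) (P S : ι → C) (Z : C) where
  N : ℕ
  Zf : Fin (N + 1) → C
  isZero_bot : IsZero (Zf 0)
  topIso : Zf (Fin.last N) ≅ Z
  lab : Fin N → ι
  aF : Fin N → ℤ
  bF : Fin N → ℤ
  f : ∀ m : Fin N, Zf m.castSucc ⟶ Zf m.succ
  g : ∀ m : Fin N, Zf m.succ ⟶ ((((σ (bF m)).obj (P (lab m)))⟦aF m⟧ : C))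
  δ : ∀ m : Fin N, ((((σ (bF m)).obj (P (lab m)))⟦aF m⟧ : C)) ⟶ ((Zf m.castSucc)⟦(1 : ℤ)⟧)
  tri : ∀ m : Fin N, Triangle.mk (f m) (g m) (δ m) ∈ distinguishedTriangles
  radical : ∀ (m : Fin N) (j : ι) (r s : ℤ)
      (u : Zf m.castSucc ⟶ ((((σ s).obj (S j))⟦r⟧ : C))),
      δ m ≫ (shiftFunctor C (1 : ℤ)).map u = 0

lemma aux_pShift_zero {ι : Type} (σ : ℤ → C ⥤ C) (P S : ι → C)
    (horth0 : ∀ (i j : ι) (a b r s : ℤ), ¬(i = j ∧ a = r ∧ b = s) →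
      ∀ φ : (((σ b).obj (P i))⟦a⟧ : C) ⟶ (((σ s).obj (S j))⟦r⟧ : C), φ = 0)
    (y : C) (hy : thickGen {y' : C | ∃ (j : ι) (s : ℤ), s < 0 ∧ y' = (σ s).obj (S j)} y) :
    ∀ (i : ι) (b n : ℤ), 0 ≤ b → ∀ φ : ((((σ b).obj (P i))⟦n⟧ : C) ⟶ y), φ = 0 := by
  induction hy with
  | @of y' hy' =>
    obtain ⟨j, s, hs, rfl⟩ := hy'
    intro i b n hb φ
    have h0 : φ ≫ (shiftFunctorZero C ℤ).inv.app ((σ s).obj (S j)) = 0 :=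
      horth0 i j n b 0 s (by rintro ⟨-, -, rfl⟩; omega) _
    have : φ = (φ ≫ (shiftFunctorZero C ℤ).inv.app ((σ s).obj (S j))) ≫
        (shiftFunctorZero C ℤ).hom.app ((σ s).obj (S j)) := by simp
    rw [this, h0, zero_comp]
  | zero h => intro i b n hb φ; exact h.eq_of_tgt φ 0
  | isoClosed e _ ih =>
    intro i b n hb φ
    have : φ ≫ e.inv = 0 := ih i b n hb _
    calc φ = (φ ≫ e.inv) ≫ e.hom := by simp
    _ = 0 := by rw [this, zero_comp]
  | @shift X m _ ih =>
    intro i b n hb φ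
    have hψ : (shiftFunctorAdd' C n (-m) (n + -m) rfl).hom.app ((σ b).obj (P i)) ≫
        (shiftFunctor C (-m)).map φ ≫
        (shiftFunctorCompIsoId C m (-m) (by omega)).hom.app X = 0 := ih i b (n + -m) hb _
    have : (shiftFunctor C (-m)).map φ = 0 := by
      have := (shiftFunctorAdd' C n (-m) (n + -m) rfl).inv.app ((σ b).obj (P i)) ≫= hψ
      rw [Iso.inv_hom_id_app_assoc, comp_zero] at this
      rw [← cancel_mono ((shiftFunctorCompIsoId C m (-m) (by omega)).hom.app X), this, zero_comp]
    exact (Functor.map_eq_zero_iff _).mp this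
  | ext₂ T hT h1 h3 ih1 ih3 =>
    intro i b n hb φ
    obtain ⟨ψ, hψ⟩ := Triangle.coyoneda_exact₂ T hT φ (ih3 i b n hb _)
    rw [hψ, ih1 i b n hb ψ, zero_comp]
  | smd s r hsr _ ih =>
    intro i b n hb φ
    calc φ = φ ≫ s ≫ r := by rw [hsr, Category.comp_id]
    _ = (φ ≫ s) ≫ r := by rw [Category.assoc]
    _ = 0 := by rw [ih i b n hb (φ ≫ s), zero_comp]


lemma aux_orth {ι : Type} (σ : ℤ → C ⥤ C) (P S : ι → C)
    (horth0 : ∀ (i j : ι) (a b r s : ℤ), ¬(i = j ∧ a = r ∧ b = s) →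
      ∀ φ : (((σ b).obj (P i))⟦a⟧ : C) ⟶ (((σ s).obj (S j))⟦r⟧ : C), φ = 0)
    (x : C) (hx : thickGen {x' : C | ∃ (i : ι) (b : ℤ), 0 ≤ b ∧ x' = (σ b).obj (P i)} x) :
    ∀ y : C, thickGen {y' : C | ∃ (j : ι) (s : ℤ), s < 0 ∧ y' = (σ s).obj (S j)} y →
      ∀ φ : x ⟶ y, φ = 0 := by
  induction hx with
  | @of x' hx' =>
    obtain ⟨i, b, hb, rfl⟩ := hx'
    intro y hy φ
    have h0 : (shiftFunctorZero C ℤ).hom.app ((σ b).obj (P i)) ≫ φ = 0 :=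
      aux_pShift_zero σ P S horth0 y hy i b 0 hb _
    calc φ = (shiftFunctorZero C ℤ).inv.app _ ≫ (shiftFunctorZero C ℤ).hom.app _ ≫ φ := by simp
    _ = 0 := by rw [h0, comp_zero]
  | zero h => intro y hy φ; exact h.eq_of_src φ 0
  | isoClosed e _ ih =>
    intro y hy φ
    have : e.hom ≫ φ = 0 := ih y hy _
    calc φ = e.inv ≫ e.hom ≫ φ := by simp
    _ = 0 := by rw [this, comp_zero]
  | @shift X m _ ih =>
    intro y hy φ
    have hψ : (shiftFunctorCompIsoId C m (-m) (by omega)).inv.app X ≫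
        (shiftFunctor C (-m)).map φ = 0 := ih _ (thickGen.shift (-m) hy) _
    have : (shiftFunctor C (-m)).map φ = 0 := by
      have := (shiftFunctorCompIsoId C m (-m) (by omega)).hom.app X ≫= hψ
      rwa [Iso.hom_inv_id_app_assoc, comp_zero] at this
    exact (Functor.map_eq_zero_iff _).mp this
  | ext₂ T hT h1 h3 ih1 ih3 =>
    intro y hy φ
    obtain ⟨ψ, hψ⟩ := Triangle.yoneda_exact₂ T hT φ (ih1 y hy _)
    rw [hψ, ih3 y hy ψ, comp_zero]
  | smd s r hsr _ ih =>
    intro y hy φ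
    calc φ = s ≫ r ≫ φ := by rw [← Category.assoc, hsr, Category.id_comp]
    _ = 0 := by rw [ih y hy (r ≫ φ), comp_zero]

lemma aux_finrank_iso (k : Type) [Field k] [Linear k C] {X Y : C} (e : X ≅ Y) (W : C) :
    Module.finrank k (X ⟶ W) = Module.finrank k (Y ⟶ W) :=
  (LinearEquiv.ofLinear (Linear.leftComp k W e.inv) (Linear.leftComp k W e.hom)
    (by ext g; simp) (by ext g; simp)).finrank_eq


lemma aux_homCount (k : Type) [Field k] [Linear k C]
    [∀ X Y : C, FiniteDimensional k (X ⟶ Y)]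
    {ι : Type} (σ : ℤ → C ⥤ C) (P S : ι → C)
    (horth1 : ∀ (i : ι) (a b : ℤ),
      Module.finrank k ((((σ b).obj (P i))⟦a⟧ : C) ⟶ (((σ b).obj (S i))⟦a⟧ : C)) = 1)
    (horth0 : ∀ (i j : ι) (a b r s : ℤ), ¬(i = j ∧ a = r ∧ b = s) →
      ∀ φ : (((σ b).obj (P i))⟦a⟧ : C) ⟶ (((σ s).obj (S j))⟦r⟧ : C), φ = 0)
    (Z : C) (mp : MinPres σ P S Z) (j : ι) (r s : ℤ) :
    Module.finrank k (Z ⟶ (((σ s).obj (S j))⟦r⟧ : C)) =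
      (Finset.univ.filter
        (fun m : Fin mp.N => mp.lab m = j ∧ mp.aF m = r ∧ mp.bF m = s)).card := by
  have key : ∀ m : Fin (mp.N + 1),
      Module.finrank k (mp.Zf m ⟶ (((σ s).obj (S j))⟦r⟧ : C)) =
      (Finset.univ.filter (fun l : Fin mp.N =>
        l.val < m.val ∧ (mp.lab l = j ∧ mp.aF l = r ∧ mp.bF l = s))).card := by
    intro m
    induction m using Fin.induction with
    | zero =>
      haveI : Subsingleton (mp.Zf 0 ⟶ (((σ s).obj (S j))⟦r⟧ : C)) :=
        ⟨fun a b => (mp.isZero_bot.eq_of_src a 0).trans (mp.isZero_bot.eq_of_src b 0).symm⟩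
      rw [Module.finrank_zero_of_subsingleton]
      simp
    | succ m ih =>
      set W := (((σ s).obj (S j))⟦r⟧ : C) with hW
      set Q := (((σ (mp.bF m)).obj (P (mp.lab m)))⟦mp.aF m⟧ : C) with hQdef
      have hT : Triangle.mk (mp.f m) (mp.g m) (mp.δ m) ∈ distTriang C := mp.tri m
      set fstar : (mp.Zf m.succ ⟶ W) →ₗ[k] (mp.Zf m.castSucc ⟶ W) :=
        Linear.leftComp k W (mp.f m) with hfstar
      set gstar : (Q ⟶ W) →ₗ[k] (mp.Zf m.succ ⟶ W) := Linear.leftComp k W (mp.g m) with hgstar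
      -- surjectivity of fstar
      have hsurj : Function.Surjective fstar := by
        intro u
        have hr := mp.radical m j r s u
        have h0 : (Triangle.invRotate (Triangle.mk (mp.f m) (mp.g m) (mp.δ m))).mor₁ ≫ u = 0 := by
          show (-(mp.δ m)⟦(-1:ℤ)⟧' ≫ (shiftFunctorCompIsoId C (1:ℤ) (-1) (by omega)).hom.app _) ≫ u = 0
          have nat := (shiftFunctorCompIsoId C (1:ℤ) (-1) (by omega)).hom.naturality u
          dsimp at nat
          simp only [Preadditive.neg_comp, Category.assoc, neg_eq_zero]
          rw [← nat, ← Functor.map_comp_assoc, hr, Functor.map_zero, zero_comp]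
        obtain ⟨v, hv⟩ := Triangle.yoneda_exact₂ _
          (inv_rot_of_distTriang (Triangle.mk (mp.f m) (mp.g m) (mp.δ m)) hT) u h0
        exact ⟨v, hv.symm⟩
      -- injectivity of gstar
      have hker0 : ∀ v : Q ⟶ W, mp.g m ≫ v = 0 → v = 0 := by
        intro v hv
        obtain ⟨w, hw⟩ : ∃ w : ((mp.Zf m.castSucc)⟦(1:ℤ)⟧ : C) ⟶ W, v = mp.δ m ≫ w :=
          Triangle.yoneda_exact₃ _ hT v hv
        set u : mp.Zf m.castSucc ⟶ ((((σ s).obj (S j))⟦r + -1⟧ : C)) :=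
          (shiftFunctorCompIsoId C (1:ℤ) (-1) (by omega)).inv.app (mp.Zf m.castSucc) ≫
            (shiftFunctor C (-1:ℤ)).map w ≫
            (shiftFunctorAdd' C r (-1) (r + -1) rfl).inv.app ((σ s).obj (S j)) with hu
        have hrad := mp.radical m j (r + -1) s u
        have hw2 : (shiftFunctor C (1:ℤ)).map u ≫
            ((shiftFunctorAdd' C r (-1) (r + -1) rfl).hom.app ((σ s).obj (S j)))⟦(1:ℤ)⟧' ≫
            (shiftFunctorCompIsoId C (-1:ℤ) 1 (by omega)).hom.app W = w := by
          have nat2 := (shiftFunctorCompIsoId C (-1:ℤ) 1 (by omega)).hom.naturality w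
          dsimp at nat2
          rw [hu]
          simp only [Functor.map_comp, Category.assoc]
          slice_lhs 3 4 => rw [← Functor.map_comp, Iso.inv_hom_id_app]
          simp
          rw [CategoryTheory.Functor.map_id, Category.id_comp]
          rw [nat2, shift_shiftFunctorCompIsoId_inv_app, Iso.inv_hom_id_app_assoc]
        rw [hw, ← hw2, ← Category.assoc, hrad, zero_comp]
      have hinj : Function.Injective gstar := by
        intro a b hab
        have : mp.g m ≫ (a - b) = 0 := by
          rw [Preadditive.comp_sub, sub_eq_zero]
          exact hab
        have := hker0 _ this
        rwa [sub_eq_zero] at this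
      -- exactness
      have hker_eq : LinearMap.ker fstar = LinearMap.range gstar := by
        ext v
        simp only [LinearMap.mem_ker, LinearMap.mem_range]
        constructor
        · intro hv
          obtain ⟨w, hw⟩ := Triangle.yoneda_exact₂ _ hT v hv
          exact ⟨w, hw.symm⟩
        · rintro ⟨w, rfl⟩
          show mp.f m ≫ mp.g m ≫ w = 0
          rw [← Category.assoc]
          have hz : mp.f m ≫ mp.g m = 0 := comp_distTriang_mor_zero₁₂ _ hT
          rw [hz, zero_comp]
      -- rank computation
      have h1 : Module.finrank k (mp.Zf m.succ ⟶ W)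
          = Module.finrank k (mp.Zf m.castSucc ⟶ W) + Module.finrank k (Q ⟶ W) := by
        have hrn := LinearMap.finrank_range_add_finrank_ker fstar
        rw [LinearMap.range_eq_top.mpr hsurj, finrank_top, hker_eq,
          LinearMap.finrank_range_of_inj hinj] at hrn
        omega
      -- the cardinality bookkeeping
      have hsplit : (Finset.univ.filter (fun l : Fin mp.N =>
            l.val < m.succ.val ∧ (mp.lab l = j ∧ mp.aF l = r ∧ mp.bF l = s))).card
          = (Finset.univ.filter (fun l : Fin mp.N =>
            l.val < m.castSucc.val ∧ (mp.lab l = j ∧ mp.aF l = r ∧ mp.bF l = s))).card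
          + (Finset.univ.filter (fun l : Fin mp.N =>
            l = m ∧ (mp.lab l = j ∧ mp.aF l = r ∧ mp.bF l = s))).card := by
        rw [← Finset.card_union_of_disjoint]
        · congr 1
          ext l
          simp only [Finset.mem_filter, Finset.mem_union, Finset.mem_univ, true_and,
            Fin.val_succ, Fin.coe_castSucc]
          constructor
          · rintro ⟨hl, ht⟩
            rcases Nat.lt_succ_iff_lt_or_eq.mp hl with h | h
            · exact Or.inl ⟨h, ht⟩
            · exact Or.inr ⟨Fin.ext h, ht⟩
          · rintro (⟨hl, ht⟩ | ⟨rfl, ht⟩)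
            · exact ⟨Nat.lt_succ_of_lt hl, ht⟩
            · exact ⟨Nat.lt_succ_self _, ht⟩
        · rw [Finset.disjoint_left]
          rintro l hl₁ hl₂
          rw [Finset.mem_filter] at hl₁ hl₂
          obtain ⟨-, hlt, -⟩ := hl₁
          obtain ⟨-, rfl, -⟩ := hl₂
          simp at hlt
      have hQcard : Module.finrank k (Q ⟶ W)
          = (Finset.univ.filter (fun l : Fin mp.N =>
            l = m ∧ (mp.lab l = j ∧ mp.aF l = r ∧ mp.bF l = s))).card := by
        by_cases htr : mp.lab m = j ∧ mp.aF m = r ∧ mp.bF m = s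
        · have hset : (Finset.univ.filter (fun l : Fin mp.N =>
              l = m ∧ (mp.lab l = j ∧ mp.aF l = r ∧ mp.bF l = s))) = {m} := by
            ext l
            simp only [Finset.mem_filter, Finset.mem_univ, true_and, Finset.mem_singleton]
            exact ⟨fun h => h.1, fun h => ⟨h, h ▸ htr⟩⟩
          rw [hset, Finset.card_singleton, hQdef, hW]
          obtain ⟨e1, e2, e3⟩ := htr
          rw [e1, e2, e3]
          exact horth1 j r s
        · have hset : (Finset.univ.filter (fun l : Fin mp.N =>
              l = m ∧ (mp.lab l = j ∧ mp.aF l = r ∧ mp.bF l = s))) = ∅ := by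
            ext l
            simp only [Finset.mem_filter, Finset.mem_univ, true_and, Finset.notMem_empty,
              iff_false]
            rintro ⟨rfl, h⟩
            exact htr h
          rw [hset, Finset.card_empty]
          haveI : Subsingleton (Q ⟶ W) :=
            ⟨fun a b => by rw [horth0 _ _ _ _ _ _ htr a, horth0 _ _ _ _ _ _ htr b]⟩
          exact Module.finrank_zero_of_subsingleton
      rw [h1, ih, hQcard, hsplit]
  have hlast := key (Fin.last mp.N)
  rw [aux_finrank_iso k mp.topIso.symm, hlast]
  congr 1
  ext l
  simp only [Finset.mem_filter, Finset.mem_univ, true_and, Fin.val_last]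
  exact ⟨fun h => h.2, fun h => ⟨l.isLt, h⟩⟩

/-- In `𝒯 = per^ℤ(Π_𝕏 A)` (for a connective smooth proper
dg algebra `A`), abstracted as a Hom-finite `k`-linear pretriangulated category
`C` with Adams shift functors `σ`, families of projectives `P i` and simples
`S j` satisfying `Hom(P_i[a+b𝕏], S_j) = 0` unless `i = j`, `a = b = 0`, in which
case it is one-dimensional: if every object admits a minimal presentation as a
twisted complex built from the `P_{i_λ}[a_λ + b_λ𝕏]` with radical differentials,
then `dim Hom(Z, S_j[r+s𝕏])` equals the number of indices `λ` with
`(i_λ, a_λ, b_λ) = (j, r, s)`; in particular the left orthogonal of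
`thick(𝒮[ℤ_{<0}𝕏])` equals `thick(𝒫[ℤ_{≥0}𝕏])`. -/
theorem minimal_presentation_hom_count_and_orthogonal
    (k : Type) [Field k] [Linear k C]
    [∀ X Y : C, FiniteDimensional k (X ⟶ Y)]
    {ι : Type} (σ : ℤ → C ⥤ C) (P S : ι → C)
    (horth1 : ∀ (i : ι) (a b : ℤ),
      Module.finrank k ((((σ b).obj (P i))⟦a⟧ : C) ⟶ (((σ b).obj (S i))⟦a⟧ : C)) = 1)
    (horth0 : ∀ (i j : ι) (a b r s : ℤ), ¬(i = j ∧ a = r ∧ b = s) →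
      ∀ φ : (((σ b).obj (P i))⟦a⟧ : C) ⟶ (((σ s).obj (S j))⟦r⟧ : C), φ = 0)
    (hpres : ∀ Z : C, Nonempty (MinPres σ P S Z)) :
    (∀ (Z : C) (mp : MinPres σ P S Z) (j : ι) (r s : ℤ),
      Module.finrank k (Z ⟶ (((σ s).obj (S j))⟦r⟧ : C)) =
        (Finset.univ.filter
          (fun m : Fin mp.N => mp.lab m = j ∧ mp.aF m = r ∧ mp.bF m = s)).card) ∧
    {Z : C | ∀ y : C, thickGen {y' : C | ∃ (j : ι) (s : ℤ), s < 0 ∧ y' = (σ s).obj (S j)} y →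
        ∀ φ : Z ⟶ y, φ = 0} =
      {Z : C | thickGen {x : C | ∃ (i : ι) (b : ℤ), 0 ≤ b ∧ x = (σ b).obj (P i)} Z} := by
  constructor
  · intro Z mp j r s
    exact aux_homCount k σ P S horth1 horth0 Z mp j r s
  · ext Z
    simp only [Set.mem_setOf_eq]
    constructor
    · intro hZ
      obtain ⟨mp⟩ := hpres Z
      have hb : ∀ m : Fin mp.N, 0 ≤ mp.bF m := by
        intro m
        by_contra hneg
        push_neg at hneg
        have h0 : Module.finrank k
            (Z ⟶ (((σ (mp.bF m)).obj (S (mp.lab m)))⟦mp.aF m⟧ : C)) = 0 := by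
          haveI : Subsingleton
              (Z ⟶ (((σ (mp.bF m)).obj (S (mp.lab m)))⟦mp.aF m⟧ : C)) := ⟨fun a b => by
            rw [hZ _ (thickGen.shift (mp.aF m)
                (thickGen.of ⟨mp.lab m, mp.bF m, hneg, rfl⟩)) a,
              hZ _ (thickGen.shift (mp.aF m)
                (thickGen.of ⟨mp.lab m, mp.bF m, hneg, rfl⟩)) b]⟩
          exact Module.finrank_zero_of_subsingleton
        rw [aux_homCount k σ P S horth1 horth0 Z mp (mp.lab m) (mp.aF m) (mp.bF m)] at h0
        have hmem : m ∈ Finset.univ.filter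
            (fun l : Fin mp.N => mp.lab l = mp.lab m ∧ mp.aF l = mp.aF m ∧
              mp.bF l = mp.bF m) := by simp
        have := Finset.card_pos.mpr ⟨m, hmem⟩
        omega
      have hall : ∀ m : Fin (mp.N + 1),
          thickGen {x : C | ∃ (i : ι) (b : ℤ), 0 ≤ b ∧ x = (σ b).obj (P i)} (mp.Zf m) := by
        intro m
        induction m using Fin.induction with
        | zero => exact thickGen.zero mp.isZero_bot
        | succ m ih =>
          exact thickGen.ext₂ (Triangle.mk (mp.f m) (mp.g m) (mp.δ m)) (mp.tri m) ih
            (thickGen.shift (mp.aF m) (thickGen.of ⟨mp.lab m, mp.bF m, hb m, rfl⟩))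
      exact thickGen.isoClosed mp.topIso (hall (Fin.last mp.N))
    · intro hZ y hy φ
      exact aux_orth σ P S horth0 Z hZ y hy φ
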